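/- Let n ≥ 1, let λ be a partition with l(λ) = n, and let μ ⊆ λ be a partition with l(μ) = n−1. Then the following identity holds in ℤ[t]: Σ_β φ_{λ/β}(t²) · t^{2(|β|−|μ|)} · sk_{β/μ}(t²) = (1 − t²) · sk_{λ/μ}(t²), where the sum is over all partitions β with μ ⊆ β, β ≼ λ (i.e. λ/β is a horizontal strip), and l(β) ≤ n−1. -/

import Mathlib

open scoped BigOperators Classical

namespace EK

/-- Conjugate partition: `conj f j = #{i : f i ≥ j}` (parts of `f` are `f 0, f 1, …`,
i.e. `f i = λ_{i+1}`). -/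
noncomputable def conj (f : ℕ → ℕ) (j : ℕ) : ℕ := Nat.card {i : ℕ // j ≤ f i}

/-- `f` represents a partition: weakly decreasing with finitely many nonzero parts. -/
def IsPartition (f : ℕ → ℕ) : Prop := Antitone f ∧ ∃ N, ∀ i, N ≤ i → f i = 0

/-- `l(f) = n`: the first `n` parts are positive, the rest vanish. -/
def HasLength (f : ℕ → ℕ) (n : ℕ) : Prop := (∀ i < n, 0 < f i) ∧ ∀ i, n ≤ i → f i = 0

/-- `|λ| = Σ_i λ_i`. -/
noncomputable def psize (f : ℕ → ℕ) : ℕ := ∑ᶠ i, f i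

/-- `n(λ) = Σ_{i ≥ 1} (i-1) λ_i` (0-indexed: `Σ_i i * f i`). -/
noncomputable def nstat (f : ℕ → ℕ) : ℕ := ∑ᶠ i, i * f i

/-- `φ_r(u) = ∏_{i=1}^r (1 - u^i)`. -/
def phiPoch {F : Type*} [Field F] (u : F) (r : ℕ) : F := ∏ i ∈ Finset.Icc 1 r, (1 - u ^ i)

/-- Gaussian binomial `binom(a,b)_u = φ_a(u)/(φ_b(u) φ_{a-b}(u))` for `0 ≤ b ≤ a`, `0` otherwise. -/
noncomputable def gauss {F : Type*} [Field F] (u : F) (a b : ℤ) : F :=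
  if 0 ≤ b ∧ b ≤ a then phiPoch u a.toNat / (phiPoch u b.toNat * phiPoch u (a - b).toNat)
  else 0

/-- `sk_{λ/μ}(u) = u^{Σ_{j≥1} C(λ'_j - μ'_j, 2)} ∏_{j≥1} binom(λ'_j - μ'_{j+1}, m_j(μ))_u`
(the factors for `j > λ_1` are all `1` and the exponents vanish there, so the product and
sum are taken over `1 ≤ j ≤ λ_1 = f 0`). -/
noncomputable def sk {F : Type*} [Field F] (u : F) (f g : ℕ → ℕ) : F :=
  u ^ (∑ j ∈ Finset.Icc 1 (f 0), Nat.choose (conj f j - conj g j) 2) *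
    ∏ j ∈ Finset.Icc 1 (f 0),
      gauss u ((conj f j : ℤ) - (conj g (j + 1) : ℤ)) ((conj g j : ℤ) - (conj g (j + 1) : ℤ))

/-- `μ ⊆ λ` and `λ/μ` is a horizontal strip, i.e. `λ'_j - μ'_j ∈ {0,1}` for all `j ≥ 1`. -/
def IsHStrip (f g : ℕ → ℕ) : Prop :=
  (∀ i, g i ≤ f i) ∧ ∀ j, 1 ≤ j → conj f j ≤ conj g j + 1

/-- `φ_{λ/μ}(u) = ∏_{j ≥ 1, λ'_j = μ'_j + 1, λ'_{j+1} = μ'_{j+1}} (1 - u^{m_j(λ)})` if `λ/μ` is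
a horizontal strip, and `0` otherwise (factors with `j > λ_1` never occur). -/
noncomputable def phiStrip {F : Type*} [Field F] (u : F) (f g : ℕ → ℕ) : F :=
  if IsHStrip f g then
    ∏ j ∈ (Finset.Icc 1 (f 0)).filter
        (fun j => conj f j = conj g j + 1 ∧ conj f (j + 1) = conj g (j + 1)),
      (1 - u ^ (conj f j - conj f (j + 1)))
  else 0

/-- `b_λ(u) = ∏_{i ≥ 1} φ_{m_i(λ)}(u)` (factors with `i > λ_1` are `1`). -/
noncomputable def bcoef {F : Type*} [Field F] (u : F) (f : ℕ → ℕ) : F :=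
  ∏ i ∈ Finset.Icc 1 (f 0), phiPoch u (conj f i - conj f (i + 1))

section Q
variable {F : Type*} [Field F] (u : F)

lemma phiPoch_succ (r : ℕ) : phiPoch u (r + 1) = phiPoch u r * (1 - u ^ (r + 1)) := by
  unfold phiPoch
  rw [Finset.prod_Icc_succ_top (by omega)]

lemma phiPoch_ne_zero (hu : ∀ m : ℕ, 1 ≤ m → 1 - u ^ m ≠ 0) (r : ℕ) : phiPoch u r ≠ 0 := by
  refine Finset.prod_ne_zero_iff.mpr fun i hi => hu i (Finset.mem_Icc.mp hi).1

lemma gauss_of_le (a b : ℕ) (h : b ≤ a) :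
    gauss u (a : ℤ) (b : ℤ) = phiPoch u a / (phiPoch u b * phiPoch u (a - b)) := by
  unfold gauss
  rw [if_pos ⟨Int.ofNat_nonneg b, by exact_mod_cast h⟩]
  have h1 : ((a : ℤ)).toNat = a := by omega
  have h2 : ((b : ℤ)).toNat = b := by omega
  have h3 : ((a : ℤ) - (b : ℤ)).toNat = a - b := by omega
  rw [h1, h2, h3]

lemma gauss_zero_of_lt (a b : ℤ) (h : a < b) : gauss u a b = 0 := by
  unfold gauss
  rw [if_neg (by omega)]

lemma gauss_zero_zero : gauss u 0 0 = 1 := by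
  unfold gauss
  rw [if_pos ⟨le_refl 0, le_refl 0⟩]
  simp [phiPoch]


lemma gauss_G (hu : ∀ m : ℕ, 1 ≤ m → 1 - u ^ m ≠ 0) (A b : ℕ) :
    (1 - u ^ A) * gauss u ((A : ℤ) - 1) (b : ℤ)
      = (1 - u ^ (A - b)) * gauss u (A : ℤ) (b : ℤ) := by
  rcases lt_or_ge (A : ℤ) (b : ℤ) with h2 | h2
  · rw [gauss_zero_of_lt u _ _ (by omega), gauss_zero_of_lt u _ _ h2, mul_zero, mul_zero]
  rcases eq_or_lt_of_le h2 with h3 | h3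
  · have hb : b = A := by exact_mod_cast h3
    subst hb
    rw [gauss_zero_of_lt u _ _ (by omega), Nat.sub_self, pow_zero, sub_self,
      zero_mul, mul_zero]
  -- now b < A
  have hbA : b + 1 ≤ A := by exact_mod_cast h3
  have hc : ((A : ℤ) - 1) = ((A - 1 : ℕ) : ℤ) := by omega
  rw [hc, gauss_of_le u (A-1) b (by omega), gauss_of_le u A b (by omega)]
  have e1 : phiPoch u A = phiPoch u (A-1) * (1 - u ^ A) := by
    have := phiPoch_succ u (A-1)
    rw [Nat.sub_add_cancel (by omega)] at this
    exact this
  have e2 : phiPoch u (A-b) = phiPoch u (A-1-b) * (1 - u ^ (A-b)) := by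
    have := phiPoch_succ u (A-b-1)
    rw [Nat.sub_add_cancel (by omega)] at this
    rw [this]
    congr 2
    omega
  rw [e1, e2]
  have n1 : phiPoch u b ≠ 0 := phiPoch_ne_zero u hu b
  have n2 : phiPoch u (A-1-b) ≠ 0 := phiPoch_ne_zero u hu _
  have n3 : (1 - u ^ (A-b)) ≠ 0 := hu _ (by omega)
  have n4 : (1 - u ^ A) ≠ 0 := hu _ (by omega)
  field_simp

end Q

section TCore
variable {F : Type*} [Field F]

noncomputable def wfun (u : F) (L M : ℕ → ℕ) (j a bb : ℕ) : F :=
  if a = 1 then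
    gauss u ((L j : ℤ) - 1 - M (j+1)) ((M j : ℤ) - M (j+1)) *
      (if bb = 0 then 1 - u ^ (L j - L (j+1)) else 1)
  else u ^ (L j - M j) * gauss u ((L j : ℤ) - M (j+1)) ((M j : ℤ) - M (j+1))

def eps (j0 e : ℕ) (S : Finset ℕ) (j : ℕ) : ℕ :=
  if j = j0 then e else if j ∈ S then 1 else 0

lemma tcore (u : F) (hu : ∀ m : ℕ, 1 ≤ m → 1 - u ^ m ≠ 0) (L M : ℕ → ℕ) (K : ℕ)
    (hLM : ∀ j, 1 ≤ j → j ≤ K + 1 → M j ≤ L j)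
    (hL : ∀ j, 1 ≤ j → L (j+1) ≤ L j)
    (hM : ∀ j, 1 ≤ j → M (j+1) ≤ M j)
    (hend : M (K+1) = L (K+1)) :
    ∀ d j e, 1 ≤ j → j + d = K →
      (∑ S ∈ (Finset.Icc (j+1) K).powerset,
        ∏ j' ∈ Finset.Icc j K, wfun u L M j' (eps j e S j') (eps j e S (j'+1)))
      = (if e = 1 then 1 - u ^ (L j - M j) else u ^ (L j - M j)) *
          ∏ j' ∈ Finset.Icc j K, gauss u ((L j' : ℤ) - M (j'+1)) ((M j' : ℤ) - M (j'+1)) := by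
  intro d
  induction d with
  | zero =>
    intro j e h1 hj
    have hjK : j = K := by omega
    subst hjK
    rw [show Finset.Icc (j+1) j = ∅ by simp, Finset.powerset_empty, Finset.sum_singleton,
      Finset.Icc_self, Finset.prod_singleton, Finset.prod_singleton]
    have he1 : eps j e ∅ j = e := by simp [eps]
    have he2 : eps j e ∅ (j+1) = 0 := by simp [eps]
    rw [he1, he2]
    -- setup arithmetic
    have hM1 : M (j+1) ≤ M j := hM j h1
    have hML : M j ≤ L j := hLM j h1 (by omega)
    have hMLs : M (j+1) ≤ L j := le_trans (le_trans hM1 hML) (le_refl _)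
    by_cases he : e = 1
    · rw [if_pos he]
      have hw : wfun u L M j e 0 = gauss u ((L j : ℤ) - 1 - M (j+1)) ((M j : ℤ) - M (j+1)) *
          (1 - u ^ (L j - L (j+1))) := by
        simp [wfun, he]
      rw [hw]
      have key := gauss_G u hu (L j - M (j+1)) (M j - M (j+1))
      have c1 : ((L j - M (j+1) : ℕ) : ℤ) - 1 = (L j : ℤ) - 1 - M (j+1) := by omega
      have c2 : ((M j - M (j+1) : ℕ) : ℤ) = (M j : ℤ) - M (j+1) := by omega
      have c3 : ((L j - M (j+1) : ℕ) : ℤ) = (L j : ℤ) - M (j+1) := by omega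
      have c4 : L j - M (j+1) - (M j - M (j+1)) = L j - M j := by omega
      have c5 : L j - L (j+1) = L j - M (j+1) := by
        have := hend; omega
      rw [c1, c2, c3, c4] at key
      rw [c5]
      linear_combination key
    · rw [if_neg he]
      have hw : wfun u L M j e 0 = u ^ (L j - M j) *
          gauss u ((L j : ℤ) - M (j+1)) ((M j : ℤ) - M (j+1)) := by
        simp [wfun, he]
      rw [hw]
  | succ d ih =>
    intro j e h1 hj
    have hjK : j < K := by omega
    have hins : Finset.Icc (j+1) K = insert (j+1) (Finset.Icc (j+2) K) :=
      (Finset.insert_Icc_add_one_left_eq_Icc (by omega)).symm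
    rw [hins, Finset.sum_powerset_insert (by simp)]
    have hicc : Finset.Icc j K = insert j (Finset.Icc (j+1) K) :=
      (Finset.insert_Icc_add_one_left_eq_Icc (by omega)).symm
    have hnotmem : j ∉ Finset.Icc (j+1) K := by simp
    -- two sums
    have step : ∀ (e' : ℕ) (S : Finset ℕ), S ∈ (Finset.Icc (j+2) K).powerset →
        ∀ T : Finset ℕ, (∀ j', j + 1 ≤ j' → j' ≤ K + 1 → eps j e T j' = eps (j+1) e' S j') →
        (∏ j' ∈ Finset.Icc j K, wfun u L M j' (eps j e T j') (eps j e T (j'+1)))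
          = wfun u L M j e (e') *
            ∏ j' ∈ Finset.Icc (j+1) K, wfun u L M j' (eps (j+1) e' S j') (eps (j+1) e' S (j'+1)) := by
      intro e' S hS T hT
      rw [hicc, Finset.prod_insert hnotmem]
      congr 1
      · have t1 : eps j e T j = e := by simp [eps]
        have t2 : eps j e T (j+1) = e' := by
          rw [hT (j+1) le_rfl (by omega)]; simp [eps]
        rw [t1, t2]
      · refine Finset.prod_congr rfl fun j' hj' => ?_
        obtain ⟨hj'1, hj'2⟩ := Finset.mem_Icc.mp hj'
        rw [hT j' hj'1 (by omega), hT (j'+1) (by omega) (by omega)]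
    have hsum0 : ∀ S ∈ (Finset.Icc (j+2) K).powerset,
        (∏ j' ∈ Finset.Icc j K, wfun u L M j' (eps j e S j') (eps j e S (j'+1)))
          = wfun u L M j e 0 *
            ∏ j' ∈ Finset.Icc (j+1) K, wfun u L M j' (eps (j+1) 0 S j') (eps (j+1) 0 S (j'+1)) := by
      intro S hS
      refine step 0 S hS S fun j' hl hr => ?_
      have hnot : j' ∉ S → True := fun _ => trivial
      by_cases hc : j' = j + 1
      · subst hc
        have : j + 1 ∉ S := fun hmem => by
          have := Finset.mem_powerset.mp hS hmem
          simp only [Finset.mem_Icc] at this; omega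
        simp [eps, this, show ¬ (j+1 = j) by omega]
      · simp [eps, hc, show ¬ (j' = j) by omega]
    have hsum1 : ∀ S ∈ (Finset.Icc (j+2) K).powerset,
        (∏ j' ∈ Finset.Icc j K,
            wfun u L M j' (eps j e (insert (j+1) S) j') (eps j e (insert (j+1) S) (j'+1)))
          = wfun u L M j e 1 *
            ∏ j' ∈ Finset.Icc (j+1) K, wfun u L M j' (eps (j+1) 1 S j') (eps (j+1) 1 S (j'+1)) := by
      intro S hS
      refine step 1 S hS (insert (j+1) S) fun j' hl hr => ?_
      by_cases hc : j' = j + 1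
      · subst hc
        simp [eps, show ¬ (j+1 = j) by omega]
      · simp [eps, hc, show ¬ (j' = j) by omega]
    rw [Finset.sum_congr rfl hsum0, Finset.sum_congr rfl hsum1, ← Finset.mul_sum, ← Finset.mul_sum,
      ih (j+1) 0 (by omega) (by omega), ih (j+1) 1 (by omega) (by omega)]
    rw [hicc, Finset.prod_insert hnotmem]
    rw [if_neg (by omega : ¬ (0:ℕ) = 1), if_pos rfl]
    set P' := ∏ j' ∈ Finset.Icc (j+1) K,
        gauss u ((L j' : ℤ) - M (j'+1)) ((M j' : ℤ) - M (j'+1)) with hP'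
    have hM1 : M (j + 1) ≤ M j := hM j h1
    have hML : M j ≤ L j := hLM j h1 (by omega)
    have hML1 : M (j+1) ≤ L (j+1) := hLM (j+1) (by omega) (by omega)
    have hL1 : L (j+1) ≤ L j := hL j h1
    by_cases he : e = 1
    · rw [if_pos he]
      have hw0 : wfun u L M j e 0 = gauss u ((L j : ℤ) - 1 - M (j+1)) ((M j : ℤ) - M (j+1)) *
          (1 - u ^ (L j - L (j+1))) := by simp [wfun, he]
      have hw1 : wfun u L M j e 1 = gauss u ((L j : ℤ) - 1 - M (j+1)) ((M j : ℤ) - M (j+1)) := by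
        simp [wfun, he]
      rw [hw0, hw1]
      have key := gauss_G u hu (L j - M (j+1)) (M j - M (j+1))
      have c1 : ((L j - M (j+1) : ℕ) : ℤ) - 1 = (L j : ℤ) - 1 - M (j+1) := by omega
      have c2 : ((M j - M (j+1) : ℕ) : ℤ) = (M j : ℤ) - M (j+1) := by omega
      have c3 : ((L j - M (j+1) : ℕ) : ℤ) = (L j : ℤ) - M (j+1) := by omega
      have c4 : L j - M (j+1) - (M j - M (j+1)) = L j - M j := by omega
      rw [c1, c2, c3, c4] at key
      have hpow : u ^ (L j - L (j+1)) * u ^ (L (j+1) - M (j+1)) = u ^ (L j - M (j+1)) := by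
        rw [← pow_add]
        congr 1
        omega
      linear_combination P' * key - gauss u ((L j : ℤ) - 1 - M (j+1)) ((M j : ℤ) - M (j+1)) *
        P' * hpow
    · rw [if_neg he]
      have hw : ∀ bb, wfun u L M j e bb = u ^ (L j - M j) *
          gauss u ((L j : ℤ) - M (j+1)) ((M j : ℤ) - M (j+1)) := by
        intro bb; simp [wfun, he]
      rw [hw 0, hw 1]
      ring

end TCore

section Conj

lemma nat_eq_of_lt_iff {a b : ℕ} (h : ∀ i, i < a ↔ i < b) : a = b := by
  have h1 := h a; have h2 := h b; omega

lemma nat_eq_of_le_iff {a b : ℕ} (h : ∀ j, 1 ≤ j → (j ≤ a ↔ j ≤ b)) : a = b := by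
  rcases Nat.eq_zero_or_pos a with ha | ha <;> rcases Nat.eq_zero_or_pos b with hb | hb
  · omega
  · have := h b hb; omega
  · have := h a ha; omega
  · have h1 := h a ha; have h2 := h b hb; omega

variable {f g : ℕ → ℕ}

lemma conj_eq_card {N : ℕ} (hN : ∀ i, N ≤ i → f i = 0) {j : ℕ} (hj : 1 ≤ j) :
    conj f j = ((Finset.range N).filter (fun i => j ≤ f i)).card := by
  have hset : {i : ℕ | j ≤ f i} = ↑((Finset.range N).filter (fun i => j ≤ f i)) := by
    ext i
    simp only [Set.mem_setOf_eq, Finset.coe_filter, Finset.mem_range, Set.mem_setOf_eq]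
    constructor
    · intro h
      refine ⟨?_, h⟩
      by_contra hc
      push_neg at hc
      have := hN i hc
      omega
    · exact fun h => h.2
  show Nat.card {i : ℕ | j ≤ f i} = _
  rw [Nat.card_coe_set_eq, hset, Set.ncard_coe_finset]

lemma lt_conj_iff (hf : Antitone f) {N : ℕ} (hN : ∀ i, N ≤ i → f i = 0) {j : ℕ} (hj : 1 ≤ j)
    (i : ℕ) : i < conj f j ↔ j ≤ f i := by
  rw [conj_eq_card hN hj]
  constructor
  · intro h
    by_contra hc
    push_neg at hc
    have hsub : (Finset.range N).filter (fun i' => j ≤ f i') ⊆ Finset.range i := by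
      intro i' hi'
      simp only [Finset.mem_filter, Finset.mem_range] at hi' ⊢
      by_contra hge
      push_neg at hge
      have := hf hge
      omega
    have := Finset.card_le_card hsub
    rw [Finset.card_range] at this
    omega
  · intro h
    have hiN : i < N := by
      by_contra hc
      push_neg at hc
      have := hN i hc
      omega
    have hsub : Finset.range (i+1) ⊆ (Finset.range N).filter (fun i' => j ≤ f i') := by
      intro i' hi'
      simp only [Finset.mem_range] at hi'
      simp only [Finset.mem_filter, Finset.mem_range]
      have hle : f i ≤ f i' := hf (by omega)
      omega
    have := Finset.card_le_card hsub
    rw [Finset.card_range] at this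
    omega

lemma conj_mono (hf : Antitone f) {Nf : ℕ} (hNf : ∀ i, Nf ≤ i → f i = 0)
    (hg : Antitone g) {Ng : ℕ} (hNg : ∀ i, Ng ≤ i → g i = 0)
    (hle : ∀ i, g i ≤ f i) {j : ℕ} (hj : 1 ≤ j) : conj g j ≤ conj f j := by
  by_contra hc
  push_neg at hc
  have h1 : j ≤ g (conj f j) := (lt_conj_iff hg hNg hj _).mp hc
  have h2 : j ≤ f (conj f j) := le_trans h1 (hle _)
  have := (lt_conj_iff hf hNf hj _).mpr h2
  omega

lemma conj_anti (hf : Antitone f) {Nf : ℕ} (hNf : ∀ i, Nf ≤ i → f i = 0)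
    {j j' : ℕ} (hj : 1 ≤ j) (hjj : j ≤ j') : conj f j' ≤ conj f j := by
  by_contra hc
  push_neg at hc
  have h1 : j' ≤ f (conj f j) := (lt_conj_iff hf hNf (by omega) _).mp hc
  have := (lt_conj_iff hf hNf hj (conj f j)).mpr (by omega)
  omega

lemma conj_eq_zero (hf : Antitone f) {Nf : ℕ} (hNf : ∀ i, Nf ≤ i → f i = 0)
    {j : ℕ} (hj : f 0 < j) : conj f j = 0 := by
  by_contra hc
  have h1 : j ≤ f 0 := (lt_conj_iff hf hNf (by omega) 0).mp (by omega)
  omega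

lemma conj_one (hf : Antitone f) (hfl : HasLength f n) : conj f 1 = n := by
  refine nat_eq_of_lt_iff fun i => ?_
  rw [lt_conj_iff (f := f) ?anti (N := n) hfl.2 le_rfl i]
  constructor
  · intro h
    by_contra hc
    push_neg at hc
    have := hfl.2 i hc
    omega
  · intro h
    exact hfl.1 i h
  case anti => exact hf

lemma psize_colsum (hf : Antitone f) {N : ℕ} (hN : ∀ i, N ≤ i → f i = 0)
    {K : ℕ} (hK : f 0 ≤ K) : psize f = ∑ j ∈ Finset.Icc 1 K, conj f j := by
  have h1 : psize f = ∑ i ∈ Finset.range N, f i := by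
    apply finsum_eq_sum_of_support_subset
    intro i hi
    simp only [Function.mem_support] at hi
    simp only [Finset.coe_range, Set.mem_Iio]
    by_contra hc; push_neg at hc; exact hi (hN i hc)
  rw [h1]
  have h2 : ∀ i ∈ Finset.range N, f i = ∑ j ∈ Finset.Icc 1 K, (if j ≤ f i then 1 else 0) := by
    intro i _
    rw [← Finset.card_filter]
    have : (Finset.Icc 1 K).filter (fun j => j ≤ f i) = Finset.Icc 1 (f i) := by
      ext j
      simp only [Finset.mem_filter, Finset.mem_Icc]
      have : f i ≤ K := le_trans (hf (Nat.zero_le i)) hK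
      omega
    rw [this, Nat.card_Icc]
    omega
  rw [Finset.sum_congr rfl h2, Finset.sum_comm]
  refine Finset.sum_congr rfl fun j hj => ?_
  rw [conj_eq_card hN (Finset.mem_Icc.mp hj).1, Finset.card_filter]

end Conj

section Main

noncomputable def bfun (f : ℕ → ℕ) (S : Finset ℕ) (j : ℕ) : ℕ := conj f j - eps 1 1 S j

noncomputable def betaF (f : ℕ → ℕ) (K : ℕ) (S : Finset ℕ) (i : ℕ) : ℕ :=
  ((Finset.Icc 1 K).filter (fun j => i < bfun f S j)).card

noncomputable def VS (f g : ℕ → ℕ) (K : ℕ) : Finset (Finset ℕ) :=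
  (Finset.Icc 2 K).powerset.filter
    (fun S => ∀ j, 1 ≤ j → conj g j ≤ bfun f S j ∧ bfun f S (j+1) ≤ bfun f S j)


/-- For partitions `λ` of length `n ≥ 1` and `μ ⊆ λ` of length `n-1`,
`Σ_β φ_{λ/β}(t²) t^{2(|β|-|μ|)} sk_{β/μ}(t²) = (1 - t²) sk_{λ/μ}(t²)`, the sum being over all
partitions `β` with `μ ⊆ β`, `λ/β` a horizontal strip, and `l(β) ≤ n-1`. -/
theorem stmt1 (n : ℕ) (hn : 1 ≤ n) (f g : ℕ → ℕ)
    (hf : IsPartition f) (hfl : HasLength f n)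
    (hg : IsPartition g) (hgl : HasLength g (n - 1))
    (hsub : ∀ i, g i ≤ f i) :
    (∑ᶠ (β : ℕ → ℕ)
        (_ : IsPartition β ∧ (∀ i, g i ≤ β i) ∧ IsHStrip f β ∧ (∀ i, n - 1 ≤ i → β i = 0)),
        phiStrip ((RatFunc.X : RatFunc ℚ) ^ 2) f β *
          ((RatFunc.X : RatFunc ℚ) ^ 2) ^ (psize β - psize g) *
          sk ((RatFunc.X : RatFunc ℚ) ^ 2) β g)
      = (1 - (RatFunc.X : RatFunc ℚ) ^ 2) * sk ((RatFunc.X : RatFunc ℚ) ^ 2) f g := by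
  classical
  obtain ⟨hfa, -⟩ := hf
  obtain ⟨hga, -⟩ := hg
  have hNf := hfl.2
  have hNg := hgl.2
  set u : RatFunc ℚ := (RatFunc.X : RatFunc ℚ) ^ 2 with hu_def
  have hu : ∀ m : ℕ, 1 ≤ m → 1 - u ^ m ≠ 0 := by
    intro m hm h
    have h1 : u ^ m = 1 := by
      have := sub_eq_zero.mp h
      exact this.symm
    rw [hu_def, ← pow_mul, ← RatFunc.algebraMap_X, ← map_pow, show (1 : RatFunc ℚ) =
      algebraMap (Polynomial ℚ) (RatFunc ℚ) 1 from (map_one _).symm] at h1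
    have h2 := RatFunc.algebraMap_injective ℚ h1
    have h3 := congrArg Polynomial.natDegree h2
    rw [Polynomial.natDegree_X_pow, Polynomial.natDegree_one] at h3
    omega
  set K := f 0 with hKdef
  have hK1 : 1 ≤ K := hfl.1 0 (by omega)
  have hL1 : conj f 1 = n := conj_one hfa hfl
  have hM1 : conj g 1 = n - 1 := conj_one hga hgl
  have hLanti : ∀ j : ℕ, 1 ≤ j → conj f (j+1) ≤ conj f j :=
    fun j hj => conj_anti hfa hNf hj (by omega)
  have hManti : ∀ j : ℕ, 1 ≤ j → conj g (j+1) ≤ conj g j :=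
    fun j hj => conj_anti hga hNg hj (by omega)
  have hML : ∀ j : ℕ, 1 ≤ j → conj g j ≤ conj f j :=
    fun j hj => conj_mono hfa hNf hga hNg hsub hj
  have hLpos : ∀ j : ℕ, 1 ≤ j → j ≤ K → 1 ≤ conj f j :=
    fun j hj hjK => (lt_conj_iff hfa hNf hj 0).mpr hjK
  have hLzero : ∀ j : ℕ, K < j → conj f j = 0 := fun j hj => conj_eq_zero hfa hNf hj
  have hMzero : ∀ j : ℕ, K < j → conj g j = 0 :=
    fun j hj => conj_eq_zero hga hNg (by have := hsub 0; omega)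
  -- eps facts
  have heps01 : ∀ (S : Finset ℕ) (j : ℕ), eps 1 1 S j = 0 ∨ eps 1 1 S j = 1 := by
    intro S j
    unfold eps
    split
    · right; rfl
    · split
      · right; rfl
      · left; rfl
  have heps1 : ∀ S : Finset ℕ, eps 1 1 S 1 = 1 := by intro S; simp [eps]
  have heps0 : ∀ S : Finset ℕ, S ⊆ Finset.Icc 2 K → ∀ j, K < j → eps 1 1 S j = 0 := by
    intro S hS j hj
    unfold eps
    rw [if_neg (by omega), if_neg]
    intro hmem
    have := Finset.mem_Icc.mp (hS hmem)
    omega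
  have hbf0 : ∀ S : Finset ℕ, S ⊆ Finset.Icc 2 K → ∀ j, K < j → bfun f S j = 0 := by
    intro S hS j hj
    unfold bfun
    rw [hLzero j hj]
    omega
  have hbf1 : ∀ S : Finset ℕ, bfun f S 1 = n - 1 := by
    intro S
    unfold bfun
    rw [hL1, heps1]
  have hbfle : ∀ (S : Finset ℕ) (j : ℕ), bfun f S j ≤ conj f j := fun S j => Nat.sub_le _ _
  have hbfge : ∀ (S : Finset ℕ) (j : ℕ), conj f j ≤ bfun f S j + 1 := by
    intro S j
    have := heps01 S j
    unfold bfun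
    omega
  -- facts for S ∈ VS
  have hsubV : ∀ S ∈ VS f g K, S ⊆ Finset.Icc 2 K :=
    fun S hS => Finset.mem_powerset.mp (Finset.mem_filter.mp hS).1
  have hVc : ∀ S ∈ VS f g K, ∀ j : ℕ, 1 ≤ j →
      conj g j ≤ bfun f S j ∧ bfun f S (j+1) ≤ bfun f S j :=
    fun S hS => (Finset.mem_filter.mp hS).2
  have hbmono : ∀ S ∈ VS f g K, ∀ j1 j2 : ℕ, 1 ≤ j1 → j1 ≤ j2 → bfun f S j2 ≤ bfun f S j1 := by
    intro S hS j1 j2 hj1 hj12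
    induction j2, hj12 using Nat.le_induction with
    | base => exact le_refl _
    | succ j2 hj2 ih => exact le_trans ((hVc S hS j2 (by omega)).2) ih
  have hbeta_le_K : ∀ (S : Finset ℕ) (i : ℕ), betaF f K S i ≤ K := by
    intro S i
    calc ((Finset.Icc 1 K).filter (fun j => i < bfun f S j)).card
        ≤ (Finset.Icc 1 K).card := Finset.card_filter_le _ _
      _ = K := by rw [Nat.card_Icc]; omega
  have hrowcol : ∀ S ∈ VS f g K, ∀ j : ℕ, 1 ≤ j → ∀ i, (j ≤ betaF f K S i ↔ i < bfun f S j) := by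
    intro S hS j hj i
    rcases le_or_gt j K with hjK | hjK
    · constructor
      · intro h
        by_contra hc
        push_neg at hc
        have hsubr : (Finset.Icc 1 K).filter (fun j' => i < bfun f S j') ⊆ Finset.Icc 1 (j-1) := by
          intro j' hj'
          simp only [Finset.mem_filter, Finset.mem_Icc] at hj' ⊢
          refine ⟨hj'.1.1, ?_⟩
          by_contra hge
          push_neg at hge
          have := hbmono S hS j j' hj (by omega)
          omega
        have hcard := Finset.card_le_card hsubr
        rw [Nat.card_Icc] at hcard
        unfold betaF at h
        omega
      · intro h
        have hsubr : Finset.Icc 1 j ⊆ (Finset.Icc 1 K).filter (fun j' => i < bfun f S j') := by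
          intro j' hj'
          simp only [Finset.mem_Icc] at hj'
          simp only [Finset.mem_filter, Finset.mem_Icc]
          have := hbmono S hS j' j hj'.1 hj'.2
          exact ⟨⟨hj'.1, by omega⟩, by omega⟩
        have hcard := Finset.card_le_card hsubr
        rw [Nat.card_Icc] at hcard
        unfold betaF
        omega
    · rw [hbf0 S (hsubV S hS) j hjK]
      have := hbeta_le_K S i
      constructor
      · intro h; omega
      · intro h; omega
  have hbeta_anti : ∀ S : Finset ℕ, Antitone (betaF f K S) := by
    intro S i1 i2 h12
    apply Finset.card_le_card
    intro j hj
    simp only [Finset.mem_filter] at hj ⊢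
    exact ⟨hj.1, by omega⟩
  have hbeta_vanish : ∀ S ∈ VS f g K, ∀ i, n - 1 ≤ i → betaF f K S i = 0 := by
    intro S hS i hi
    by_contra hc
    have h1 : 1 ≤ betaF f K S i := by omega
    have h2 := (hrowcol S hS 1 le_rfl i).mp h1
    rw [hbf1 S] at h2
    omega
  have hconjbeta : ∀ S ∈ VS f g K, ∀ j : ℕ, 1 ≤ j → conj (betaF f K S) j = bfun f S j := by
    intro S hS j hj
    have hset : {i : ℕ | j ≤ betaF f K S i} = Set.Iio (bfun f S j) := by
      ext i
      simp only [Set.mem_setOf_eq, Set.mem_Iio]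
      exact hrowcol S hS j hj i
    show Nat.card {i : ℕ | j ≤ betaF f K S i} = _
    rw [Nat.card_coe_set_eq, hset]
    simp [Set.ncard_eq_toFinset_card']
  have hPbeta : ∀ S ∈ VS f g K,
      IsPartition (betaF f K S) ∧ (∀ i, g i ≤ betaF f K S i) ∧ IsHStrip f (betaF f K S) ∧
        (∀ i, n - 1 ≤ i → betaF f K S i = 0) := by
    intro S hS
    refine ⟨⟨hbeta_anti S, ⟨n - 1, hbeta_vanish S hS⟩⟩, ?_, ⟨?_, ?_⟩, hbeta_vanish S hS⟩
    · intro i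
      rcases Nat.eq_zero_or_pos (g i) with h0 | hpos
      · omega
      · have h1 : i < conj g (g i) := (lt_conj_iff hga hNg hpos i).mpr le_rfl
        have h2 : conj g (g i) ≤ bfun f S (g i) := (hVc S hS (g i) hpos).1
        have h3 := (hrowcol S hS (g i) hpos i).mpr (by omega)
        exact h3
    · intro i
      rcases Nat.eq_zero_or_pos (betaF f K S i) with h0 | hpos
      · omega
      · have h1 : i < bfun f S (betaF f K S i) := (hrowcol S hS _ hpos i).mp le_rfl
        have h2 := hbfle S (betaF f K S i)
        exact (lt_conj_iff hfa hNf hpos i).mp (by omega)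
    · intro j hj
      rw [hconjbeta S hS j hj]
      exact hbfge S j
  -- the weight function
  set W : (ℕ → ℕ) → RatFunc ℚ := fun β =>
    phiStrip u f β * u ^ (psize β - psize g) * sk u β g with hW_def
  set A : ℕ := ∑ j ∈ Finset.Icc 1 K, Nat.choose (conj f j - conj g j) 2 with hA_def
  have hW : ∀ S ∈ VS f g K, W (betaF f K S) =
      u ^ A * ∏ j ∈ Finset.Icc 1 K,
        wfun u (conj f) (conj g) j (eps 1 1 S j) (eps 1 1 S (j+1)) := by
    intro S hS
    have hSsub := hsubV S hS
    obtain ⟨hpart, hgb, hstrip, hvan⟩ := hPbeta S hS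
    have hphi : phiStrip u f (betaF f K S) =
        ∏ j ∈ Finset.Icc 1 K, (if eps 1 1 S j = 1 ∧ eps 1 1 S (j+1) = 0
          then 1 - u ^ (conj f j - conj f (j+1)) else 1) := by
      rw [phiStrip, if_pos hstrip, ← hKdef, Finset.prod_filter]
      refine Finset.prod_congr rfl fun j hj => ?_
      obtain ⟨hj1, hjK⟩ := Finset.mem_Icc.mp hj
      have hc1 := hconjbeta S hS j hj1
      have hc2 := hconjbeta S hS (j+1) (by omega)
      have e1 := heps01 S j
      have e2 := heps01 S (j+1)
      have l1 := hLpos j hj1 hjK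
      refine if_congr ?_ rfl rfl
      constructor
      · rintro ⟨h1, h2⟩
        constructor
        · rw [hc1] at h1
          unfold bfun at h1
          omega
        · rcases le_or_gt (j+1) K with h | h
          · have := hLpos (j+1) (by omega) h
            rw [hc2] at h2
            unfold bfun at h2
            omega
          · exact heps0 S hSsub (j+1) h
      · rintro ⟨h1, h2⟩
        constructor
        · rw [hc1]
          unfold bfun
          omega
        · rw [hc2]
          unfold bfun
          rw [h2]
          omega
    have hpsz : u ^ (psize (betaF f K S) - psize g) =
        ∏ j ∈ Finset.Icc 1 K, u ^ (bfun f S j - conj g j) := by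
      rw [Finset.prod_pow_eq_pow_sum]
      congr 1
      have h1 : psize (betaF f K S) = ∑ j ∈ Finset.Icc 1 K, bfun f S j := by
        rw [psize_colsum (hbeta_anti S) (hbeta_vanish S hS) (hbeta_le_K S 0)]
        exact Finset.sum_congr rfl fun j hj => hconjbeta S hS j (Finset.mem_Icc.mp hj).1
      have h2 : psize g = ∑ j ∈ Finset.Icc 1 K, conj g j :=
        psize_colsum hga hNg (by have := hsub 0; omega)
      have h4 : ∑ j ∈ Finset.Icc 1 K, (bfun f S j - conj g j) + ∑ j ∈ Finset.Icc 1 K, conj g j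
          = ∑ j ∈ Finset.Icc 1 K, bfun f S j := by
        rw [← Finset.sum_add_distrib]
        refine Finset.sum_congr rfl fun j hj => ?_
        have := (hVc S hS j (Finset.mem_Icc.mp hj).1).1
        omega
      omega
    have hbig : ∀ j ∈ Finset.Icc 1 K, j ∉ Finset.Icc 1 (betaF f K S 0) →
        bfun f S j = 0 ∧ conj g j = 0 ∧ conj g (j+1) = 0 := by
      intro j hjK hjn
      obtain ⟨hj1, hjK2⟩ := Finset.mem_Icc.mp hjK
      have hjgt : betaF f K S 0 < j := by
        simp only [Finset.mem_Icc] at hjn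
        omega
      have hb : bfun f S j = 0 := by
        have := hrowcol S hS j hj1 0
        omega
      have hg1 : conj g j = 0 := by
        have := (hVc S hS j hj1).1
        omega
      have hg2 : conj g (j+1) = 0 := by
        have := hManti j hj1
        omega
      exact ⟨hb, hg1, hg2⟩
    have hsub2 : Finset.Icc 1 (betaF f K S 0) ⊆ Finset.Icc 1 K := by
      intro j hj
      simp only [Finset.mem_Icc] at *
      exact ⟨hj.1, le_trans hj.2 (hbeta_le_K S 0)⟩
    have hsk2 : sk u (betaF f K S) g =
        u ^ (∑ j ∈ Finset.Icc 1 K, Nat.choose (bfun f S j - conj g j) 2) *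
          ∏ j ∈ Finset.Icc 1 K,
            gauss u ((bfun f S j : ℤ) - (conj g (j+1) : ℤ))
              ((conj g j : ℤ) - (conj g (j+1) : ℤ)) := by
      rw [sk]
      congr 1
      · congr 1
        rw [Finset.sum_subset hsub2]
        · exact Finset.sum_congr rfl fun j hj =>
            by rw [hconjbeta S hS j (Finset.mem_Icc.mp hj).1]
        · intro j hjK hjn
          obtain ⟨hb, hg1, -⟩ := hbig j hjK hjn
          rw [hconjbeta S hS j (Finset.mem_Icc.mp hjK).1, hb, hg1]
          rfl
      · rw [Finset.prod_subset hsub2]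
        · exact Finset.prod_congr rfl fun j hj =>
            by rw [hconjbeta S hS j (Finset.mem_Icc.mp hj).1]
        · intro j hjK hjn
          obtain ⟨hb, hg1, hg2⟩ := hbig j hjK hjn
          rw [hconjbeta S hS j (Finset.mem_Icc.mp hjK).1, hb, hg1, hg2]
          norm_num
          exact gauss_zero_zero u
    show phiStrip u f (betaF f K S) * u ^ (psize (betaF f K S) - psize g) *
        sk u (betaF f K S) g = _
    rw [hphi, hpsz, hsk2, hA_def]
    rw [← Finset.prod_pow_eq_pow_sum, ← Finset.prod_pow_eq_pow_sum]
    rw [← Finset.prod_mul_distrib, ← Finset.prod_mul_distrib, ← Finset.prod_mul_distrib,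
      ← Finset.prod_mul_distrib]
    refine Finset.prod_congr rfl fun j hj => ?_
    obtain ⟨hj1, hjK⟩ := Finset.mem_Icc.mp hj
    have l1 := hLpos j hj1 hjK
    have hMle := (hVc S hS j hj1).1
    have hMa := hManti j hj1
    have hMLj := hML j hj1
    rcases heps01 S j with h0 | h1
    · have hbv : bfun f S j = conj f j := by
        unfold bfun
        rw [h0]
        omega
      rw [if_neg (by rintro ⟨hcond1, -⟩; omega)]
      rw [h0]
      have hw : wfun u (conj f) (conj g) j 0 (eps 1 1 S (j+1)) =
          u ^ (conj f j - conj g j) *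
            gauss u ((conj f j : ℤ) - (conj g (j+1) : ℤ))
              ((conj g j : ℤ) - (conj g (j+1) : ℤ)) := by
        simp [wfun]
      rw [hw, hbv]
      ring
    · have hbv : bfun f S j = conj f j - 1 := by
        unfold bfun
        rw [h1]
      have hexp : (bfun f S j - conj g j) + Nat.choose (bfun f S j - conj g j) 2
          = Nat.choose (conj f j - conj g j) 2 := by
        have hES : conj f j - conj g j = (bfun f S j - conj g j) + 1 := by omega
        rw [hES]
        rw [Nat.choose_succ_succ (bfun f S j - conj g j) 1, Nat.choose_one_right]
      have hcast : ((bfun f S j : ℤ) - (conj g (j+1) : ℤ))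
          = ((conj f j : ℤ) - 1 - (conj g (j+1) : ℤ)) := by omega
      rw [hcast, h1]
      rw [show (if (1 = 1 ∧ eps 1 1 S (j+1) = 0)
            then (1 - u ^ (conj f j - conj f (j+1))) else 1)
          = (if eps 1 1 S (j+1) = 0 then (1 - u ^ (conj f j - conj f (j+1))) else 1)
        from if_congr (and_iff_right rfl) rfl rfl]
      have hw : wfun u (conj f) (conj g) j 1 (eps 1 1 S (j+1)) =
          gauss u ((conj f j : ℤ) - 1 - (conj g (j+1) : ℤ))
            ((conj g j : ℤ) - (conj g (j+1) : ℤ)) *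
            (if eps 1 1 S (j+1) = 0 then 1 - u ^ (conj f j - conj f (j+1)) else 1) := by
        simp [wfun]
      rw [hw]
      have hpows : u ^ (bfun f S j - conj g j) * u ^ (Nat.choose (bfun f S j - conj g j) 2)
          = u ^ (Nat.choose (conj f j - conj g j) 2) := by
        rw [← pow_add, hexp]
      set x := (if eps 1 1 S (j+1) = 0 then (1 - u ^ (conj f j - conj f (j+1))) else 1) with hx
      set G := gauss u ((conj f j : ℤ) - 1 - (conj g (j+1) : ℤ))
        ((conj g j : ℤ) - (conj g (j+1) : ℤ)) with hG
      linear_combination x * G * hpows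
  have hzeroW : ∀ S ∈ (Finset.Icc 2 K).powerset, S ∉ VS f g K →
      (∏ j ∈ Finset.Icc 1 K,
        wfun u (conj f) (conj g) j (eps 1 1 S j) (eps 1 1 S (j+1))) = 0 := by
    intro S hS hSV
    have hSsub := Finset.mem_powerset.mp hS
    have hviol : ¬ ∀ j : ℕ, 1 ≤ j → conj g j ≤ bfun f S j ∧ bfun f S (j+1) ≤ bfun f S j :=
      fun hall => hSV (Finset.mem_filter.mpr ⟨hS, hall⟩)
    have hex : ∃ j : ℕ, 1 ≤ j ∧
        ¬(conj g j ≤ bfun f S j ∧ bfun f S (j+1) ≤ bfun f S j) := by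
      by_contra hc
      push_neg at hc
      exact hviol hc
    obtain ⟨j, hj, hbad⟩ := hex
    by_cases hA : conj g j ≤ bfun f S j
    · have hB : bfun f S j < bfun f S (j+1) := by
        by_contra hc
        push_neg at hc
        exact hbad ⟨hA, hc⟩
      have hj1K : j + 1 ≤ K := by
        by_contra hc
        push_neg at hc
        have := hbf0 S hSsub (j+1) (by omega)
        omega
      have e1 := heps01 S j
      have e2 := heps01 S (j+1)
      have l1 := hLanti j hj
      have l2 := hLpos (j+1) (by omega) hj1K
      have heq : conj f j = conj f (j+1) ∧ eps 1 1 S j = 1 ∧ eps 1 1 S (j+1) = 0 := by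
        unfold bfun at hB
        omega
      refine Finset.prod_eq_zero (Finset.mem_Icc.mpr ⟨hj, by omega⟩) ?_
      rw [heq.2.1, heq.2.2]
      have hwf : wfun u (conj f) (conj g) j 1 0 =
          gauss u ((conj f j : ℤ) - 1 - (conj g (j+1) : ℤ))
            ((conj g j : ℤ) - (conj g (j+1) : ℤ)) * (1 - u ^ (conj f j - conj f (j+1))) := by
        simp [wfun]
      rw [hwf, show conj f j - conj f (j+1) = 0 by omega, pow_zero, sub_self, mul_zero]
    · have hjK : j ≤ K := by
        by_contra hc
        push_neg at hc
        have h1 := hMzero j (by omega)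
        omega
      have e1 := heps01 S j
      have hεj : eps 1 1 S j = 1 := by
        have := hML j hj
        unfold bfun at hA
        omega
      refine Finset.prod_eq_zero (Finset.mem_Icc.mpr ⟨hj, hjK⟩) ?_
      rw [hεj]
      have hg0 : gauss u ((conj f j : ℤ) - 1 - (conj g (j+1) : ℤ))
          ((conj g j : ℤ) - (conj g (j+1) : ℤ)) = 0 := by
        apply gauss_zero_of_lt
        have h2 := hML j hj
        have h3 := hManti j hj
        have e4 := hLpos j hj hjK
        unfold bfun at hA
        omega
      have hwf : wfun u (conj f) (conj g) j 1 (eps 1 1 S (j+1)) =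
          gauss u ((conj f j : ℤ) - 1 - (conj g (j+1) : ℤ))
            ((conj g j : ℤ) - (conj g (j+1) : ℤ)) *
            (if eps 1 1 S (j+1) = 0 then 1 - u ^ (conj f j - conj f (j+1)) else 1) := by
        simp [wfun]
      rw [hwf, hg0, zero_mul]
  -- LHS conversion
  have hLHS : (∑ᶠ (β : ℕ → ℕ)
        (_ : IsPartition β ∧ (∀ i, g i ≤ β i) ∧ IsHStrip f β ∧ (∀ i, n - 1 ≤ i → β i = 0)),
        W β) = ∑ S ∈ VS f g K, W (betaF f K S) := by
    have h1 : ∀ β : ℕ → ℕ, (∑ᶠ (_ : IsPartition β ∧ (∀ i, g i ≤ β i) ∧ IsHStrip f β ∧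
        (∀ i, n - 1 ≤ i → β i = 0)), W β)
        = if (IsPartition β ∧ (∀ i, g i ≤ β i) ∧ IsHStrip f β ∧ (∀ i, n - 1 ≤ i → β i = 0))
          then W β else 0 := fun β => finsum_eq_if
    rw [finsum_congr h1]
    have hinj : ∀ x ∈ VS f g K, ∀ y ∈ VS f g K, betaF f K x = betaF f K y → x = y := by
      intro S1 h1 S2 h2 heq
      have hb : ∀ j, 1 ≤ j → bfun f S1 j = bfun f S2 j := fun j hj => by
        rw [← hconjbeta S1 h1 j hj, ← hconjbeta S2 h2 j hj, heq]
      have key : ∀ S1' S2', S1' ∈ VS f g K → S2' ∈ VS f g K →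
          (∀ j, 1 ≤ j → bfun f S1' j = bfun f S2' j) → ∀ j, j ∈ S1' → j ∈ S2' := by
        intro S1' S2' h1' h2' hb' j hmem
        have hjK := Finset.mem_Icc.mp (hsubV S1' h1' hmem)
        by_contra hnot
        have e1 : eps 1 1 S1' j = 1 := by simp [eps, hmem, show j ≠ 1 by omega]
        have e2 : eps 1 1 S2' j = 0 := by simp [eps, hnot, show j ≠ 1 by omega]
        have e3 := hb' j (by omega)
        have e4 := hLpos j (by omega) (by omega)
        unfold bfun at e3
        omega
      ext j
      constructor
      · exact key S1 S2 h1 h2 hb j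
      · exact key S2 S1 h2 h1 (fun j hj => (hb j hj).symm) j
    have hsupp : Function.support (fun β : ℕ → ℕ =>
        if (IsPartition β ∧ (∀ i, g i ≤ β i) ∧ IsHStrip f β ∧ (∀ i, n - 1 ≤ i → β i = 0))
          then W β else 0) ⊆ ↑((VS f g K).image (betaF f K)) := by
      intro β hβ
      simp only [Function.mem_support, ne_eq] at hβ
      have hP : IsPartition β ∧ (∀ i, g i ≤ β i) ∧ IsHStrip f β ∧
          (∀ i, n - 1 ≤ i → β i = 0) := by
        by_contra hc
        rw [if_neg hc] at hβ
        exact hβ rfl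
      obtain ⟨⟨hba, -⟩, hgb, hstrip, hvan⟩ := hP
      set S : Finset ℕ := (Finset.Icc 2 K).filter (fun j => conj β j < conj f j) with hSdef
      have hβle : ∀ j : ℕ, 1 ≤ j → conj β j ≤ conj f j :=
        fun j hj => conj_mono hfa hNf hba hvan hstrip.1 hj
      have hβge : ∀ j : ℕ, 1 ≤ j → conj f j ≤ conj β j + 1 := hstrip.2
      have hβ1 : conj β 1 = n - 1 := by
        have hle : conj β 1 ≤ n - 1 := by
          rw [conj_eq_card hvan le_rfl]
          have := Finset.card_filter_le (Finset.range (n-1)) (fun i => 1 ≤ β i)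
          rw [Finset.card_range] at this
          exact this
        have hge := hβge 1 le_rfl
        omega
      have hconjb : ∀ j : ℕ, 1 ≤ j → conj β j = bfun f S j := by
        intro j hj
        by_cases hj1 : j = 1
        · subst hj1
          rw [hbf1 S]
          exact hβ1
        · rcases le_or_gt j K with hjK | hjK
          · by_cases hmem : j ∈ S
            · have hlt := (Finset.mem_filter.mp hmem).2
              have he : eps 1 1 S j = 1 := by simp [eps, hmem, hj1]
              unfold bfun
              rw [he]
              have := hβge j hj
              omega
            · have he : eps 1 1 S j = 0 := by simp [eps, hmem, hj1]
              unfold bfun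
              rw [he]
              have hnlt : ¬ (conj β j < conj f j) := by
                intro hlt
                exact hmem (Finset.mem_filter.mpr ⟨Finset.mem_Icc.mpr ⟨by omega, hjK⟩, hlt⟩)
              have := hβle j hj
              omega
          · have h0 : conj f j = 0 := hLzero j hjK
            have he : eps 1 1 S j = 0 := by
              have : j ∉ S := by
                intro hmem
                have := Finset.mem_Icc.mp (Finset.mem_filter.mp hmem).1
                omega
              simp [eps, this, hj1]
            unfold bfun
            rw [he, h0]
            have := hβle j hj
            omega
      have hSV : S ∈ VS f g K := by
        refine Finset.mem_filter.mpr ⟨Finset.mem_powerset.mpr (Finset.filter_subset _ _), ?_⟩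
        intro j hj
        constructor
        · rw [← hconjb j hj]
          exact conj_mono hba hvan hga hNg hgb hj
        · rw [← hconjb j hj, ← hconjb (j+1) (by omega)]
          exact conj_anti hba hvan hj (by omega)
      have hbeq : betaF f K S = β := by
        funext i
        refine nat_eq_of_le_iff fun j hj => ?_
        rw [hrowcol S hSV j hj i, ← hconjb j hj, lt_conj_iff hba hvan hj i]
      simp only [Finset.coe_image, Set.mem_image, Finset.mem_coe]
      exact ⟨S, hSV, hbeq⟩
    rw [finsum_eq_sum_of_support_subset _ hsupp, Finset.sum_image hinj]
    refine Finset.sum_congr rfl fun S hS => if_pos (hPbeta S hS)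
  rw [show (∑ᶠ (β : ℕ → ℕ)
        (_ : IsPartition β ∧ (∀ i, g i ≤ β i) ∧ IsHStrip f β ∧ (∀ i, n - 1 ≤ i → β i = 0)),
        phiStrip u f β * u ^ (psize β - psize g) * sk u β g) = ∑ S ∈ VS f g K, W (betaF f K S)
      from hLHS]
  rw [Finset.sum_congr rfl hW, ← Finset.mul_sum]
  have hVsub : VS f g K ⊆ (Finset.Icc 2 K).powerset :=
    fun S hS => (Finset.mem_filter.mp hS).1
  rw [Finset.sum_subset hVsub (fun S hS hSV => hzeroW S hS hSV)]
  have htc := tcore u hu (conj f) (conj g) K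
    (fun j hj _ => hML j hj) hLanti hManti
    (by rw [hLzero (K+1) (by omega), hMzero (K+1) (by omega)])
    (K - 1) 1 1 (le_refl 1) (by omega)
  rw [show Finset.Icc (1+1) K = Finset.Icc 2 K from rfl] at htc
  rw [htc, if_pos rfl]
  have hsk : sk u f g = u ^ A *
      ∏ j ∈ Finset.Icc 1 K,
        gauss u ((conj f j : ℤ) - (conj g (j + 1) : ℤ)) ((conj g j : ℤ) - (conj g (j + 1) : ℤ)) := by
    rw [sk, hA_def, hKdef]
  rw [hsk, show conj f 1 - conj g 1 = 1 by omega, pow_one]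
  ring

end Main

end EK
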